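/- Let (m(r), p(r)) be a C¹ solution of the TOV system on an interval of radii r > 0 with p > 0, m > 0 and 2Gm < c²r, and let ω : (0,∞) → (0,∞) be a strictly increasing C¹ function of p with logarithmic derivative f(p) = d ln ω/d ln p. Set ξ = ln r and define along the solution u = 4πr³ρ(p)/m, v = (ρ(p)c²/p)·(Gm/(c²r))/(1 − 2Gm/(c²r)), σ = p/(ρ(p)c²), Υ = (p/ρ(p))·(dρ/dp). Then u, v, ω satisfy the autonomous system du/dξ = u(3 − u + Υh), dv/dξ = v[−(1 − Υ)h + (u − 1)(1 + 2σv)], dω/dξ = f ω h, where h = −v(1 + σ)(1 + σu). -/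

import Mathlib

open Real Set

set_option maxHeartbeats 2000000

/-- `u = 4πr³ρ(p)/m` as a function of `ξ = ln r`. -/
noncomputable def uFun (ρ m p : ℝ → ℝ) (t : ℝ) : ℝ :=
  4 * Real.pi * Real.exp t ^ 3 * ρ (p (Real.exp t)) / m (Real.exp t)

/-- `v = (ρc²/p)·(Gm/(c²r))/(1 − 2Gm/(c²r))` as a function of `ξ = ln r`. -/
noncomputable def vFun (G c : ℝ) (ρ m p : ℝ → ℝ) (t : ℝ) : ℝ :=
  ρ (p (Real.exp t)) * c ^ 2 / p (Real.exp t) *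
    (G * m (Real.exp t) / (c ^ 2 * Real.exp t) /
      (1 - 2 * G * m (Real.exp t) / (c ^ 2 * Real.exp t)))

/-- `ω(p)` as a function of `ξ = ln r`. -/
noncomputable def wFun (ω p : ℝ → ℝ) (t : ℝ) : ℝ := ω (p (Real.exp t))

/-- `σ = p/(ρ(p)c²)`. -/
noncomputable def sigmaAt (c : ℝ) (ρ : ℝ → ℝ) (q : ℝ) : ℝ := q / (ρ q * c ^ 2)

/-- `Υ = (p/ρ(p))·(dρ/dp)`. -/
noncomputable def upsilonAt (ρ ρ' : ℝ → ℝ) (q : ℝ) : ℝ := q / ρ q * ρ' q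

/-- `f = d ln ω / d ln p`. -/
noncomputable def fAt (ω ω' : ℝ → ℝ) (q : ℝ) : ℝ := q * ω' q / ω q

/-- `h = −v(1 + σ)(1 + σu)` along the solution. -/
noncomputable def hFun (G c : ℝ) (ρ m p : ℝ → ℝ) (t : ℝ) : ℝ :=
  -vFun G c ρ m p t * (1 + sigmaAt c ρ (p (Real.exp t))) *
    (1 + sigmaAt c ρ (p (Real.exp t)) * uFun ρ m p t)

/-- A C¹ solution of the TOV system, expressed in the variables
`u, v, ω` with independent variable `ξ = ln r`, satisfies the autonomous system
`du/dξ = u(3 − u + Υh)`, `dv/dξ = v[−(1 − Υ)h + (u − 1)(1 + 2σv)]`, `dω/dξ = fωh`,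
where `h = −v(1 + σ)(1 + σu)`. -/
theorem stmt0
    (G c : ℝ) (hG : 0 < G) (hc : 0 < c)
    (ρ ρ' : ℝ → ℝ)
    (hρcont : ContinuousOn ρ (Ici 0))
    (hρC2 : ContDiffOn ℝ 2 ρ (Ioi 0))
    (hρnonneg : ∀ q ≥ 0, 0 ≤ ρ q)
    (hρpos : ∀ q > 0, 0 < ρ q)
    (hρderiv : ∀ q > 0, HasDerivAt ρ (ρ' q) q)
    (hρ'nonneg : ∀ q > 0, 0 ≤ ρ' q)
    (ω ω' : ℝ → ℝ)
    (hωpos : ∀ q > 0, 0 < ω q)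
    (hωmono : StrictMonoOn ω (Ioi 0))
    (hωderiv : ∀ q > 0, HasDerivAt ω (ω' q) q)
    (hω'pos : ∀ q > 0, 0 < ω' q)
    (hω'cont : ContinuousOn ω' (Ioi 0))
    (s : Set ℝ) (hs : s ⊆ Ioi 0) (hso : IsOpen s)
    (m p : ℝ → ℝ)
    (hsol : ∀ r ∈ s,
      0 < p r ∧ 0 < m r ∧ 2 * G * m r < c ^ 2 * r ∧
      HasDerivAt m (4 * Real.pi * r ^ 2 * ρ (p r)) r ∧
      HasDerivAt p (-(G * m r * ρ (p r) / r ^ 2) *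
        (1 + p r / (ρ (p r) * c ^ 2)) *
        (1 + 4 * Real.pi * r ^ 3 * p r / (m r * c ^ 2)) *
        (1 - 2 * G * m r / (c ^ 2 * r))⁻¹) r) :
    ∀ ξ : ℝ, Real.exp ξ ∈ s →
      HasDerivAt (uFun ρ m p)
        (uFun ρ m p ξ * (3 - uFun ρ m p ξ +
          upsilonAt ρ ρ' (p (Real.exp ξ)) * hFun G c ρ m p ξ)) ξ ∧
      HasDerivAt (vFun G c ρ m p)
        (vFun G c ρ m p ξ *
          (-((1 - upsilonAt ρ ρ' (p (Real.exp ξ))) * hFun G c ρ m p ξ) +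
            (uFun ρ m p ξ - 1) *
              (1 + 2 * sigmaAt c ρ (p (Real.exp ξ)) * vFun G c ρ m p ξ))) ξ ∧
      HasDerivAt (wFun ω p)
        (fAt ω ω' (p (Real.exp ξ)) * wFun ω p ξ * hFun G c ρ m p ξ) ξ := by
  
  intro ξ hξ
  have hrpos : 0 < Real.exp ξ := Real.exp_pos ξ
  obtain ⟨hP, hM, hD0, hm, hp⟩ := hsol _ hξ
  set r : ℝ := Real.exp ξ with hr
  set P : ℝ := p r with hPdef
  set M : ℝ := m r with hMdef
  have hRpos : 0 < ρ P := hρpos P hP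
  have hcr : (0:ℝ) < c ^ 2 * r := by positivity
  have hDpos : 0 < 1 - 2 * G * M / (c ^ 2 * r) := by
    rw [sub_pos, div_lt_one hcr]; exact hD0
  have rne : r ≠ 0 := ne_of_gt hrpos
  have Pne : P ≠ 0 := ne_of_gt hP
  have Mne : M ≠ 0 := ne_of_gt hM
  have Rne : ρ P ≠ 0 := ne_of_gt hRpos
  have cne : (c:ℝ) ≠ 0 := ne_of_gt hc
  have crne : c ^ 2 * r ≠ 0 := ne_of_gt hcr
  have Dne : 1 - 2 * G * M / (c ^ 2 * r) ≠ 0 := ne_of_gt hDpos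
  have hD2 : c ^ 2 * r - 2 * G * M ≠ 0 := ne_of_gt (by linarith)
  have wne : ω P ≠ 0 := ne_of_gt (hωpos P hP)
  have hE : HasDerivAt Real.exp r ξ := Real.hasDerivAt_exp ξ
  have hm0 : HasDerivAt (fun t => m (Real.exp t))
      (4 * Real.pi * r ^ 2 * ρ P * r) ξ := hm.comp ξ hE
  have hph : (-(G * M * ρ P / r ^ 2) * (1 + P / (ρ P * c ^ 2)) *
      (1 + 4 * Real.pi * r ^ 3 * P / (M * c ^ 2)) *
      (1 - 2 * G * M / (c ^ 2 * r))⁻¹) * r = P * hFun G c ρ m p ξ := by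
    simp only [hFun, vFun, uFun, sigmaAt, ← hr, ← hPdef, ← hMdef]
    field_simp [rne, Pne, Mne, Rne, cne, Dne, hD2, wne]
  have hp0 : HasDerivAt (fun t => p (Real.exp t)) (P * hFun G c ρ m p ξ) ξ := by
    rw [← hph]; exact hp.comp ξ hE
  set H : ℝ := hFun G c ρ m p ξ with hHdef
  have hρ0 : HasDerivAt (fun t => ρ (p (Real.exp t))) (ρ' P * (P * H)) ξ :=
    (hρderiv P hP).comp ξ hp0
  have hω0 : HasDerivAt (fun t => ω (p (Real.exp t))) (ω' P * (P * H)) ξ :=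
    (hωderiv P hP).comp ξ hp0
  refine ⟨?_, ?_, ?_⟩
  · have hu : HasDerivAt (uFun ρ m p)
        (((4 * Real.pi * ((3:ℕ) * Real.exp ξ ^ (3 - 1) * r) * ρ P
            + 4 * Real.pi * Real.exp ξ ^ 3 * (ρ' P * (P * H))) * M
          - 4 * Real.pi * Real.exp ξ ^ 3 * ρ P * (4 * Real.pi * r ^ 2 * ρ P * r)) / M ^ 2) ξ :=
      (((hE.pow 3).const_mul (4 * Real.pi)).mul hρ0).div hm0 Mne
    convert hu using 1
    simp only [uFun, upsilonAt, ← hr, ← hPdef, ← hMdef, ← hHdef]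
    field_simp [rne, Pne, Mne, Rne, cne, Dne, hD2, wne]
    ring
  · have hq1 : HasDerivAt (fun t => ρ (p (Real.exp t)) * c ^ 2 / p (Real.exp t))
        ((ρ' P * (P * H) * c ^ 2 * P - ρ P * c ^ 2 * (P * H)) / P ^ 2) ξ :=
      (hρ0.mul_const (c ^ 2)).div hp0 Pne
    have hq2 : HasDerivAt (fun t => G * m (Real.exp t) / (c ^ 2 * Real.exp t))
        ((G * (4 * Real.pi * r ^ 2 * ρ P * r) * (c ^ 2 * r) - G * M * (c ^ 2 * r))
          / (c ^ 2 * r) ^ 2) ξ :=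
      (hm0.const_mul G).div (hE.const_mul (c ^ 2)) crne
    have hq3 : HasDerivAt (fun t => 1 - 2 * G * m (Real.exp t) / (c ^ 2 * Real.exp t))
        (-((2 * G * (4 * Real.pi * r ^ 2 * ρ P * r) * (c ^ 2 * r) - 2 * G * M * (c ^ 2 * r))
          / (c ^ 2 * r) ^ 2)) ξ :=
      ((hm0.const_mul (2 * G)).div (hE.const_mul (c ^ 2)) crne).const_sub 1
    have hv : HasDerivAt (vFun G c ρ m p)
        ((ρ' P * (P * H) * c ^ 2 * P - ρ P * c ^ 2 * (P * H)) / P ^ 2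
            * (G * M / (c ^ 2 * r) / (1 - 2 * G * M / (c ^ 2 * r)))
          + ρ P * c ^ 2 / P *
            (((G * (4 * Real.pi * r ^ 2 * ρ P * r) * (c ^ 2 * r) - G * M * (c ^ 2 * r))
                / (c ^ 2 * r) ^ 2 * (1 - 2 * G * M / (c ^ 2 * r))
              - G * M / (c ^ 2 * r) *
                (-((2 * G * (4 * Real.pi * r ^ 2 * ρ P * r) * (c ^ 2 * r)
                    - 2 * G * M * (c ^ 2 * r)) / (c ^ 2 * r) ^ 2)))
              / (1 - 2 * G * M / (c ^ 2 * r)) ^ 2)) ξ :=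
      hq1.mul (hq2.div hq3 Dne)
    convert hv using 1
    simp only [uFun, vFun, upsilonAt, sigmaAt, ← hr, ← hPdef, ← hMdef, ← hHdef, hFun]
    field_simp [rne, Pne, Mne, Rne, cne, Dne, hD2, wne]
    have hD3 : c ^ 2 * r - G * M * 2 ≠ 0 := by
      intro h; apply hD2; linarith
    have hD4 : (1:ℝ) + G * M * 2 / (c ^ 2 * r - G * M * 2)
        = c ^ 2 * r / (c ^ 2 * r - G * M * 2) := by
      rw [eq_div_iff hD3, add_mul, div_mul_cancel₀ _ hD3]; ring
    rw [hD4, div_eq_div_iff hD3 (pow_ne_zero 2 hD3)]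
    field_simp
    have hinv : (c ^ 2 * r - G * M * 2) * (c ^ 2 * r - G * M * 2)⁻¹ = 1 :=
      mul_inv_cancel₀ hD3
    linear_combination ((c ^ 2 * r - G * M * 2) *
      (-(r * c ^ 2 * M * ρ P) + 4 * r ^ 4 * c ^ 2 * Real.pi * ρ P ^ 2)) * hinv
  · have heq : fAt ω ω' (p (Real.exp ξ)) * wFun ω p ξ * hFun G c ρ m p ξ
        = ω' P * (P * H) := by
      simp only [fAt, wFun, ← hr, ← hPdef, ← hHdef]
      field_simp [rne, Pne, Mne, Rne, cne, Dne, hD2, wne]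
    rw [heq]
    exact hω0
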